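/- The degree-three discrete-time stability region, i.e., the set of (x₁,x₂,x₃) for which z³ + x₁z² + x₂z + x₃ has all roots in the open unit disk, is contained in the simplex with vertices (-3,3,-1), (-1,-1,1), (1,-1,-1), (3,3,1). -/

import Mathlib

lemma cubic_has_real_root (a b c : ℝ) : ∃ r : ℝ, r^3 + a*r^2 + b*r + c = 0 := by
  set f : ℝ → ℝ := fun t => t^3 + a*t^2 + b*t + c with hf
  set M : ℝ := 1 + |a| + |b| + |c| with hM
  have hM1 : 1 ≤ M := by nlinarith [abs_nonneg a, abs_nonneg b, abs_nonneg c]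
  have hfM : 0 ≤ f M := by
    simp only [hf]
    nlinarith [abs_nonneg a, abs_nonneg b, abs_nonneg c, le_abs_self a, le_abs_self b,
      le_abs_self c, neg_abs_le a, neg_abs_le b, neg_abs_le c, sq_nonneg M]
  have hfm : f (-M) ≤ 0 := by
    simp only [hf]
    nlinarith [abs_nonneg a, abs_nonneg b, abs_nonneg c, le_abs_self a, le_abs_self b,
      le_abs_self c, neg_abs_le a, neg_abs_le b, neg_abs_le c, sq_nonneg M]
  have hcont : ContinuousOn f (Set.Icc (-M) M) := by fun_prop
  obtain ⟨r, _, hr⟩ := intermediate_value_Icc (by linarith : (-M) ≤ M) hcont ⟨hfm, hfM⟩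
  exact ⟨r, hr⟩

lemma stability_ineqs (x₁ x₂ x₃ : ℝ)
    (h : ∀ z : ℂ, z ^ 3 + (x₁ : ℂ) * z ^ 2 + (x₂ : ℂ) * z + (x₃ : ℂ) = 0 →
      ‖z‖ < 1) :
    0 ≤ 1 - x₁ + x₂ - x₃ ∧ 0 ≤ 3 - x₁ - x₂ + 3*x₃ ∧
    0 ≤ 3 + x₁ - x₂ - 3*x₃ ∧ 0 ≤ 1 + x₁ + x₂ + x₃ := by
  obtain ⟨r, hr⟩ := cubic_has_real_root x₁ x₂ x₃
  have hrabs : |r| < 1 := by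
    have := h r (by exact_mod_cast congrArg (Complex.ofReal) hr)
    rwa [Complex.norm_real, Real.norm_eq_abs] at this
  obtain ⟨p, q, hx1, hx2, hx3⟩ : ∃ p q : ℝ, x₁ = p - r ∧ x₂ = q - p*r ∧ x₃ = -q*r := by
    refine ⟨x₁ + r, x₂ + (x₁ + r)*r, by ring, by ring, by linear_combination hr⟩
  obtain ⟨hr1, hr2⟩ := abs_lt.mp hrabs
  have key : 0 ≤ 1 - p + q ∧ 0 ≤ 1 + p + q ∧ q < 1 := by
    rcases le_or_gt (4*q) (p^2) with hd | hd
    · -- real roots of the quadratic factor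
      have he2 : Real.sqrt (p^2 - 4*q) ^ 2 = p^2 - 4*q := Real.sq_sqrt (by linarith)
      obtain ⟨s, t, hst, hstm, hs2, ht2⟩ :
          ∃ s t : ℝ, s + t = -p ∧ s * t = q ∧ s^2 + p*s + q = 0 ∧ t^2 + p*t + q = 0 := by
        refine ⟨(-p + Real.sqrt (p^2 - 4*q))/2, (-p - Real.sqrt (p^2 - 4*q))/2,
          by ring, by linear_combination (-(1:ℝ)/4) * he2,
          by linear_combination ((1:ℝ)/4) * he2, by linear_combination ((1:ℝ)/4) * he2⟩
      have hsroot : s^3 + x₁*s^2 + x₂*s + x₃ = 0 := by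
        rw [hx1, hx2, hx3]; linear_combination (s - r) * hs2
      have htroot : t^3 + x₁*t^2 + x₂*t + x₃ = 0 := by
        rw [hx1, hx2, hx3]; linear_combination (t - r) * ht2
      have hsabs : |s| < 1 := by
        have := h s (by exact_mod_cast congrArg (Complex.ofReal) hsroot)
        rwa [Complex.norm_real, Real.norm_eq_abs] at this
      have htabs : |t| < 1 := by
        have := h t (by exact_mod_cast congrArg (Complex.ofReal) htroot)
        rwa [Complex.norm_real, Real.norm_eq_abs] at this
      obtain ⟨hsa, hsb⟩ := abs_lt.mp hsabs
      obtain ⟨hta, htb⟩ := abs_lt.mp htabs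
      refine ⟨?_, ?_, ?_⟩
      · nlinarith [mul_pos (by linarith : (0:ℝ) < 1 + s) (by linarith : (0:ℝ) < 1 + t)]
      · nlinarith [mul_pos (by linarith : (0:ℝ) < 1 - s) (by linarith : (0:ℝ) < 1 - t)]
      · nlinarith [mul_pos (by linarith : (0:ℝ) < 1 - s) (by linarith : (0:ℝ) < 1 + t),
          mul_pos (by linarith : (0:ℝ) < 1 + s) (by linarith : (0:ℝ) < 1 - t)]
    · -- complex conjugate roots of the quadratic factor
      have he2 : Real.sqrt (4*q - p^2) ^ 2 = 4*q - p^2 := Real.sq_sqrt (by linarith)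
      have he2c : ((Real.sqrt (4*q - p^2) : ℝ) : ℂ)^2 = 4*(q:ℂ) - (p:ℂ)^2 := by
        exact_mod_cast congrArg (Complex.ofReal) he2
      obtain ⟨α, hα2, hαn⟩ : ∃ α : ℂ, α^2 + (p:ℂ)*α + (q:ℂ) = 0 ∧ Complex.normSq α = q := by
        refine ⟨⟨-p/2, Real.sqrt (4*q - p^2)/2⟩, ?_, ?_⟩
        · rw [Complex.mk_eq_add_mul_I]
          push_cast
          linear_combination (((Real.sqrt (4*q - p^2) : ℝ) : ℂ)^2/4) * Complex.I_sq
            + (-1/4 : ℂ) * he2c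
        · rw [Complex.normSq_mk]
          linear_combination ((1:ℝ)/4) * he2
      have hαroot : α ^ 3 + (x₁ : ℂ) * α ^ 2 + (x₂ : ℂ) * α + (x₃ : ℂ) = 0 := by
        rw [hx1, hx2, hx3]
        push_cast
        linear_combination (α - (r:ℂ)) * hα2
      have hαabs := h α hαroot
      have hq1 : q < 1 := by
        have h1 : Complex.normSq α < 1 := by
          rw [← Complex.sq_norm]
          nlinarith [norm_nonneg α]
        linarith [hαn ▸ h1]
      exact ⟨by nlinarith [sq_nonneg (2 - p)], by nlinarith [sq_nonneg (2 + p)], hq1⟩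
  obtain ⟨k1, k2, k3⟩ := key
  refine ⟨?_, ?_, ?_, ?_⟩ <;> rw [hx1, hx2, hx3]
  · nlinarith [mul_nonneg k1 (by linarith : (0:ℝ) ≤ 1 + r)]
  · nlinarith [mul_nonneg k1 (by linarith : (0:ℝ) ≤ 1 - r),
      mul_nonneg (by linarith : (0:ℝ) ≤ 1 - q) (by linarith : (0:ℝ) ≤ 1 + r)]
  · nlinarith [mul_nonneg k2 (by linarith : (0:ℝ) ≤ 1 + r),
      mul_nonneg (by linarith : (0:ℝ) ≤ 1 - q) (by linarith : (0:ℝ) ≤ 1 - r)]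
  · nlinarith [mul_nonneg k2 (by linarith : (0:ℝ) ≤ 1 - r)]

/-- The degree-three discrete-time stability region, i.e. the set of
`(x₁,x₂,x₃) ∈ ℝ³` for which `z³ + x₁z² + x₂z + x₃` has all complex roots in
the open unit disk, is contained in the simplex with vertices
`(-3,3,-1)`, `(-1,-1,1)`, `(1,-1,-1)`, `(3,3,1)`. -/
theorem stability_region_subset_simplex :
    {x : Fin 3 → ℝ | ∀ z : ℂ,
        z ^ 3 + (x 0 : ℂ) * z ^ 2 + (x 1 : ℂ) * z + (x 2 : ℂ) = 0 →
        ‖z‖ < 1}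
      ⊆ convexHull ℝ
        {![(-3 : ℝ), 3, -1], ![(-1 : ℝ), -1, 1],
          ![(1 : ℝ), -1, -1], ![(3 : ℝ), 3, 1]} := by
  intro x hx
  obtain ⟨h0, h1, h2, h3⟩ := stability_ineqs (x 0) (x 1) (x 2) hx
  have hv : ∀ i : Fin 4,
      (![![(-3 : ℝ), 3, -1], ![(-1 : ℝ), -1, 1], ![(1 : ℝ), -1, -1], ![(3 : ℝ), 3, 1]] : Fin 4 → Fin 3 → ℝ) i
        ∈ ({![(-3 : ℝ), 3, -1], ![(-1 : ℝ), -1, 1],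
          ![(1 : ℝ), -1, -1], ![(3 : ℝ), 3, 1]} : Set (Fin 3 → ℝ)) := by
    intro i; fin_cases i <;> simp
  set v : Fin 4 → (Fin 3 → ℝ) :=
    ![![(-3 : ℝ), 3, -1], ![(-1 : ℝ), -1, 1], ![(1 : ℝ), -1, -1], ![(3 : ℝ), 3, 1]] with hvdef
  set w : Fin 4 → ℝ :=
    ![(1 - x 0 + x 1 - x 2)/8, (3 - x 0 - x 1 + 3*x 2)/8,
      (3 + x 0 - x 1 - 3*x 2)/8, (1 + x 0 + x 1 + x 2)/8] with hw
  have hwn : ∀ i ∈ Finset.univ, 0 ≤ w i := by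
    intro i _
    fin_cases i <;> simp [hw] <;> linarith
  have hsum : ∑ i, w i = 1 := by
    simp [hw, Fin.sum_univ_four]; ring
  have hxeq : x = ∑ i, w i • v i := by
    funext j
    fin_cases j <;>
      simp [hw, hvdef, Fin.sum_univ_four, Matrix.cons_val_zero, Matrix.cons_val_one] <;> ring
  rw [hxeq]
  exact (convex_convexHull ℝ _).sum_mem hwn hsum
    (fun i _ => subset_convexHull ℝ _ (hv i))
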